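/- arXiv:2509.06032 — 2 statements merged into one kernel-verified Lean document; each statement's English description precedes it below -/
import Mathlib

section
/- For every n ≥ 1, the coefficient h(n) of q^n in ∑_{j≥1} (-1)^{j+1} q^{j(j+1)/2}/(1 - q^j) equals the number of divisors d of n satisfying u(n) < 2d ≤ 2u(n), where u(n) = √(2n + 1/4) − 1/2. In particular h(n) ≥ 0. -/
open scoped Classical

/-- `hcoef m k N` is the coefficient of `q^N` in
`∑_{n≥1} (-1)^{n-1} q^{k·n(n-1)/2 + m·n}/(1-q^n)`. -/
noncomputable def hcoef (m k N : ℕ) : ℤ :=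
  ∑ n ∈ Finset.Icc 1 (2*N+2),
    (-1)^(n-1) *
      (if k*(n*(n-1)/2) + m*n ≤ N ∧ n ∣ (N - (k*(n*(n-1)/2) + m*n)) then 1 else 0)

/-- `u m k n = √(2kn + (m - k/2)²) − (m − k/2)`. -/
noncomputable def u (m k n : ℕ) : ℝ :=
  Real.sqrt (2*k*n + ((m : ℝ) - k/2)^2) - ((m : ℝ) - k/2)

/-- `hd m k n` is the number of divisors `d` of `n` with `u m k n < 2kd ≤ 2·u m k n`. -/
noncomputable def hd (m k n : ℕ) : ℕ :=
  (n.divisors.filter (fun d => u m k n < ((2*k*d : ℕ) : ℝ) ∧ ((2*k*d : ℕ) : ℝ) ≤ 2 * u m k n)).card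

private lemma twoT (j : ℕ) (hj : 1 ≤ j) : 2 * (j*(j-1)/2 + j) = j*j + j := by
  obtain ⟨i, rfl⟩ : ∃ i, j = i + 1 := ⟨j - 1, by omega⟩
  have h2 : 2 ∣ (i+1)*i := by simpa [Nat.mul_comm] using (Nat.even_mul_succ_self i).two_dvd
  have e : (i+1)*(i+1) + (i+1) = (i+1)*i + 2*(i+1) := by ring
  simp only [Nat.add_sub_cancel]
  omega

private lemma odd_dvd_T (j : ℕ) (hj : Odd j) : j ∣ (j*(j-1)/2 + j) := by
  obtain ⟨k, rfl⟩ := hj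
  refine ⟨k + 1, ?_⟩
  have h1 : (2*k+1)*(2*k+1-1) = ((2*k+1)*k)*2 := by
    simp only [Nat.add_sub_cancel]; ring
  have h2 : (2*k+1)*(k+1) = (2*k+1)*k + (2*k+1) := by ring
  rw [h1, Nat.mul_div_cancel _ (by norm_num)]
  omega

private lemma odd_dvd_oddpart {n v m c : ℕ} (hnm : 2^v * m = n) (hc : ¬ 2 ∣ c) (hcn : c ∣ n) :
    c ∣ m := by
  have hcop : c.Coprime (2^v) :=
    Nat.Coprime.pow_right v ((Nat.Prime.coprime_iff_not_dvd Nat.prime_two).2 hc).symm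
  exact hcop.dvd_of_dvd_mul_left (by rwa [hnm])

private lemma stepAB (n : ℕ) (hn : 1 ≤ n) :
    hcoef 1 1 n =
      ((((Finset.Icc 1 (2*n+2)).filter
        (fun j => j*(j-1)/2 + j ≤ n ∧ j ∣ (n - (j*(j-1)/2 + j)))).filter
          (fun j => Odd j)).card : ℤ)
      - ((((Finset.Icc 1 (2*n+2)).filter
        (fun j => j*(j-1)/2 + j ≤ n ∧ j ∣ (n - (j*(j-1)/2 + j)))).filter
          (fun j => ¬ Odd j)).card : ℤ) := by
  set T : Finset ℕ := (Finset.Icc 1 (2*n+2)).filter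
      (fun j => j*(j-1)/2 + j ≤ n ∧ j ∣ (n - (j*(j-1)/2 + j))) with hT
  have h1 : hcoef 1 1 n = ∑ j ∈ T, (-1:ℤ)^(j-1) := by
    rw [hcoef, hT, Finset.sum_filter]
    refine Finset.sum_congr rfl (fun j _ => ?_)
    simp only [one_mul, mul_ite, mul_one, mul_zero]
  rw [h1, ← Finset.sum_filter_add_sum_filter_not T (fun j => Odd j)]
  have h2 : ∀ j ∈ T.filter (fun j => Odd j), ((-1:ℤ))^(j-1) = 1 := by
    intro j hj
    simp only [Finset.mem_filter, Finset.mem_Icc, hT] at hj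
    obtain ⟨⟨⟨hj1, _⟩, _⟩, hodd⟩ := hj
    have : Even (j - 1) := by
      obtain ⟨k, hk⟩ := hodd; exact ⟨k, by omega⟩
    exact Even.neg_one_pow this
  have h3 : ∀ j ∈ T.filter (fun j => ¬ Odd j), ((-1:ℤ))^(j-1) = -1 := by
    intro j hj
    simp only [Finset.mem_filter, Finset.mem_Icc, hT] at hj
    obtain ⟨⟨⟨hj1, _⟩, _⟩, hodd⟩ := hj
    have hje := Nat.not_odd_iff_even.1 hodd
    have : Odd (j - 1) := by
      obtain ⟨k, hk⟩ := hje; exact ⟨k - 1, by omega⟩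
    exact Odd.neg_one_pow this
  rw [Finset.sum_congr rfl h2, Finset.sum_congr rfl h3, Finset.sum_const, Finset.sum_const]
  simp [sub_eq_add_neg]

private lemma stepC (n : ℕ) (hn0 : n ≠ 0) :
    ((Finset.Icc 1 (2*n+2)).filter
      (fun j => j*(j-1)/2 + j ≤ n ∧ j ∣ (n - (j*(j-1)/2 + j)))).filter (fun j => Odd j)
    = n.divisors.filter (fun c => Odd c ∧ c*c < 2*n) := by
  ext j
  simp only [Finset.mem_filter, Finset.mem_Icc, Nat.mem_divisors]
  constructor
  · rintro ⟨⟨⟨hj1, _⟩, hTle, hdvd⟩, hodd⟩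
    have hjT := odd_dvd_T j hodd
    have h2T := twoT j hj1
    refine ⟨⟨?_, hn0⟩, hodd, ?_⟩
    · have := dvd_add hdvd hjT
      rwa [Nat.sub_add_cancel hTle] at this
    · omega
  · rintro ⟨⟨hjn, _⟩, hodd, hlt⟩
    have hj1 : 1 ≤ j := Nat.pos_of_dvd_of_pos hjn (by omega)
    obtain ⟨e, he⟩ := hjn
    have hjT := odd_dvd_T j hodd
    have h2T := twoT j hj1
    have hlt' : j * j < j * (2 * e) := by
      calc j * j < 2 * n := hlt
      _ = j * (2*e) := by rw [he]; ring
    have hje : j < 2 * e := Nat.lt_of_mul_lt_mul_left hlt'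
    have hTle : j*(j-1)/2 + j ≤ n := by
      have h1 : j * (j+1) ≤ j * (2*e) := Nat.mul_le_mul_left j (by omega)
      have h2 : j * (j+1) = j*j + j := by ring
      have h3 : j * (2*e) = 2 * n := by rw [he]; ring
      omega
    have hjle : j ≤ n := Nat.le_of_dvd (by omega) ⟨e, he⟩
    exact ⟨⟨⟨hj1, by omega⟩, hTle, Nat.dvd_sub ⟨e, he⟩ hjT⟩, hodd⟩

private lemma stepD (n : ℕ) (hn0 : n ≠ 0) :
    (((Finset.Icc 1 (2*n+2)).filter
      (fun j => j*(j-1)/2 + j ≤ n ∧ j ∣ (n - (j*(j-1)/2 + j)))).filter (fun j => ¬ Odd j)).card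
    = (n.divisors.filter (fun c => Odd c ∧ 2*n < c*c)).card := by
  have key : ∀ j, 1 ≤ j → ¬ Odd j →
      (j*(j-1)/2 + j ≤ n ∧ j ∣ (n - (j*(j-1)/2 + j))) →
      2*n = j * (2*n/j) ∧ Odd (2*n/j) ∧ j < 2*n/j := by
    rintro j hj1 hodd ⟨hTle, hdvd⟩
    have h2T := twoT j hj1
    have hje : j % 2 = 0 := by
      rcases Nat.even_or_odd j with h | h
      · exact Nat.even_iff.1 h
      · exact absurd h hodd
    obtain ⟨d, hd⟩ := hdvd
    have h2n : 2*n = j*(j+1+2*d) := by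
      have e1 : j*(j+1+2*d) = j*j + j + 2*(j*d) := by ring
      omega
    have hq : 2*n/j = j+1+2*d := by rw [h2n, Nat.mul_div_cancel_left _ (by omega)]
    refine ⟨by rw [hq]; exact h2n, ?_, ?_⟩
    · rw [hq]; exact Nat.odd_iff.2 (by omega)
    · rw [hq]; omega
  refine Finset.card_nbij' (fun j => 2*n/j) (fun c => 2*n/c) ?_ ?_ ?_ ?_
  · intro j hj
    simp only [Finset.mem_coe, Finset.mem_filter, Finset.mem_Icc] at hj
    obtain ⟨⟨⟨hj1, _⟩, hP⟩, hodd⟩ := hj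
    obtain ⟨h2n, hoddc, hlt⟩ := key j hj1 hodd hP
    have hc1 : 0 < 2*n/j := by omega
    simp only [Finset.mem_coe, Finset.mem_filter, Nat.mem_divisors]
    have hcdvd2 : (2*n/j) ∣ 2*n := Nat.div_dvd_of_dvd ⟨2*n/j, h2n⟩
    have hcop : (2*n/j).Coprime 2 :=
      Nat.Coprime.symm ((Nat.Prime.coprime_iff_not_dvd Nat.prime_two).2
        (by rw [Nat.two_dvd_ne_zero, ← Nat.odd_iff]; exact hoddc))
    have hcn : (2*n/j) ∣ n := hcop.dvd_of_dvd_mul_left hcdvd2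
    refine ⟨⟨hcn, hn0⟩, hoddc, ?_⟩
    calc 2*n = j * (2*n/j) := h2n
      _ < (2*n/j) * (2*n/j) := Nat.mul_lt_mul_of_pos_right hlt hc1
  · intro c hc
    simp only [Finset.mem_coe, Finset.mem_filter, Nat.mem_divisors] at hc
    obtain ⟨⟨hcn, _⟩, hoddc, hgt⟩ := hc
    obtain ⟨e, he⟩ := hcn
    have hc1 : 1 ≤ c := Nat.pos_of_dvd_of_pos ⟨e, he⟩ (by omega)
    have he1 : 1 ≤ e := by
      rcases Nat.eq_zero_or_pos e with h | h
      · subst h; omega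
      · exact h
    have hq : 2*n/c = 2*e := by
      rw [he, show 2*(c*e) = c*(2*e) by ring, Nat.mul_div_cancel_left _ hc1]
    have h2elt : 2*e < c := by
      have h1 : c*(2*e) < c*c := by
        rw [show c*(2*e) = 2*(c*e) by ring, ← he]; exact hgt
      exact Nat.lt_of_mul_lt_mul_left h1
    have hcodd : c % 2 = 1 := Nat.odd_iff.1 hoddc
    obtain ⟨d, hd⟩ : ∃ d, c = 2*e + 1 + 2*d := ⟨(c - 2*e - 1)/2, by omega⟩
    have h2T := twoT (2*e) (by omega)
    have hkey : c*e = 2*(e*e) + e + 2*(e*d) := by rw [hd]; ring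
    have hee : (2*e)*(2*e) = 4*(e*e) := by ring
    have hTle : (2*e)*((2*e)-1)/2 + 2*e ≤ n := by omega
    have hsub : n - ((2*e)*((2*e)-1)/2 + 2*e) = (2*e)*d := by
      have h4 : (2*e)*d = 2*(e*d) := by ring
      omega
    simp only [Finset.mem_coe, Finset.mem_filter, Finset.mem_Icc]
    rw [hq]
    refine ⟨⟨⟨by omega, ?_⟩, hTle, ⟨d, hsub⟩⟩, ?_⟩
    · have : e ≤ n := by
        calc e ≤ c * e := Nat.le_mul_of_pos_left e hc1
        _ = n := he.symm
      omega
    · intro h; have := Nat.odd_iff.1 h; omega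
  · intro j hj
    simp only [Finset.mem_coe, Finset.mem_filter, Finset.mem_Icc] at hj
    obtain ⟨⟨⟨hj1, _⟩, hP⟩, hodd⟩ := hj
    obtain ⟨h2n, _, _⟩ := key j hj1 hodd hP
    exact Nat.div_div_self ⟨2*n/j, h2n⟩ (by omega)
  · intro c hc
    simp only [Finset.mem_coe, Finset.mem_filter, Nat.mem_divisors] at hc
    obtain ⟨⟨hcn, _⟩, _, _⟩ := hc
    exact Nat.div_div_self (hcn.mul_left 2) (by omega)

private lemma stepF (n v m : ℕ) (hn0 : n ≠ 0) (hnm : 2^v * m = n) (hm2 : ¬ 2 ∣ m) :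
    ((n.divisors.filter (fun c => Odd c ∧ c*c < 2*n)).filter
        (fun c => ¬ n ≤ 2 * (2^v * 2^v) * (c*c))).card
    = (n.divisors.filter (fun c => Odd c ∧ 2*n < c*c)).card := by
  set p := 2^v with hp
  have hp1 : 1 ≤ p := Nat.one_le_two_pow
  have hmn : m ∣ n := ⟨p, by rw [← hnm, Nat.mul_comm]⟩
  refine Finset.card_nbij' (fun c => m/c) (fun c => m/c) ?_ ?_ ?_ ?_
  · intro c hc
    simp only [Finset.mem_coe, Finset.mem_filter, Nat.mem_divisors, not_le] at hc ⊢
    obtain ⟨⟨⟨hcn, _⟩, hodd, hcc⟩, hlt⟩ := hc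
    have hc2 : ¬ 2 ∣ c := by rw [Nat.two_dvd_ne_zero, ← Nat.odd_iff]; exact hodd
    have hcm : c ∣ m := odd_dvd_oddpart hnm hc2 hcn
    have hc1 : 1 ≤ c := Nat.pos_of_dvd_of_pos hcm (by omega)
    obtain ⟨c', hc'⟩ := hcm
    have hq : m/c = c' := by rw [hc', Nat.mul_div_cancel_left _ hc1]
    rw [hq]
    have hc'm : c' ∣ m := ⟨c, by rw [hc']; ring⟩
    have hc'1 : 1 ≤ c' := Nat.pos_of_dvd_of_pos hc'm (by omega)
    have hc'2 : ¬ 2 ∣ c' := fun h => hm2 (h.trans hc'm)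
    have step1 : (p*c) * (2*(p*c)) < (p*c) * c' := by
      have e1 : (p*c)*(2*(p*c)) = 2*(p*p)*(c*c) := by ring
      have e2 : (p*c)*c' = n := by rw [← hnm, hc']; ring
      rw [e1, e2]; exact hlt
    have h2pc : 2*(p*c) < c' := Nat.lt_of_mul_lt_mul_left step1
    refine ⟨⟨hc'm.trans hmn, hn0⟩, Nat.odd_iff.2 (by omega), ?_⟩
    have e3 : 2*n = (2*(p*c))*c' := by rw [← hnm, hc']; ring
    rw [e3]; exact Nat.mul_lt_mul_of_pos_right h2pc hc'1
  · intro c hc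
    simp only [Finset.mem_coe, Finset.mem_filter, Nat.mem_divisors, not_le] at hc ⊢
    obtain ⟨⟨hcn, _⟩, hodd, hgt⟩ := hc
    have hc2 : ¬ 2 ∣ c := by rw [Nat.two_dvd_ne_zero, ← Nat.odd_iff]; exact hodd
    have hcm : c ∣ m := odd_dvd_oddpart hnm hc2 hcn
    have hc1 : 1 ≤ c := Nat.pos_of_dvd_of_pos hcm (by omega)
    obtain ⟨c', hc'⟩ := hcm
    have hq : m/c = c' := by rw [hc', Nat.mul_div_cancel_left _ hc1]
    rw [hq]
    have hc'm : c' ∣ m := ⟨c, by rw [hc']; ring⟩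
    have hc'1 : 1 ≤ c' := Nat.pos_of_dvd_of_pos hc'm (by omega)
    have hc'2 : ¬ 2 ∣ c' := fun h => hm2 (h.trans hc'm)
    have h1 : c * (2*(p*c')) < c * c := by
      rw [show c*(2*(p*c')) = 2*n from by rw [← hnm, hc']; ring]; exact hgt
    have h2pc : 2*(p*c') < c := Nat.lt_of_mul_lt_mul_left h1
    have hfin : 2*(p*p)*(c'*c') < n := by
      have e1 : 2*(p*p)*(c'*c') = (p*c')*(2*(p*c')) := by ring
      have e2 : n = (p*c')*c := by rw [← hnm, hc']; ring
      rw [e1, e2]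
      exact Nat.mul_lt_mul_of_pos_left h2pc (by positivity)
    refine ⟨⟨⟨hc'm.trans hmn, hn0⟩, Nat.odd_iff.2 (by omega), ?_⟩, hfin⟩
    have : c'*c' ≤ 2*(p*p)*(c'*c') := Nat.le_mul_of_pos_left _ (by positivity)
    omega
  · intro c hc
    simp only [Finset.mem_coe, Finset.mem_filter, Nat.mem_divisors, not_le] at hc
    obtain ⟨⟨⟨hcn, _⟩, hodd, _⟩, _⟩ := hc
    have hc2 : ¬ 2 ∣ c := by rw [Nat.two_dvd_ne_zero, ← Nat.odd_iff]; exact hodd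
    exact Nat.div_div_self (odd_dvd_oddpart hnm hc2 hcn) (by omega)
  · intro c hc
    simp only [Finset.mem_coe, Finset.mem_filter, Nat.mem_divisors] at hc
    obtain ⟨⟨hcn, _⟩, hodd, _⟩ := hc
    have hc2 : ¬ 2 ∣ c := by rw [Nat.two_dvd_ne_zero, ← Nat.odd_iff]; exact hodd
    exact Nat.div_div_self (odd_dvd_oddpart hnm hc2 hcn) (by omega)

private lemma stepG (n v m : ℕ) (hn0 : n ≠ 0) (hv : v = n.factorization 2)
    (hnm : 2^v * m = n) :
    (n.divisors.filter (fun d => n ≤ 2*(d*d) ∧ d*d < 2*n)).card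
    = ((n.divisors.filter (fun c => Odd c ∧ c*c < 2*n)).filter
        (fun c => n ≤ 2 * (2^v * 2^v) * (c*c))).card := by
  refine Finset.card_bij (fun d _ => d / 2^(d.factorization 2)) ?_ ?_ ?_
  · intro d hd
    simp only [Finset.mem_filter, Nat.mem_divisors] at hd ⊢
    obtain ⟨⟨hdn, _⟩, hnle, hdlt⟩ := hd
    have hd0 : d ≠ 0 := by rintro rfl; simp at hnle; omega
    set i := d.factorization 2 with hi
    set c := d / 2^i with hc
    have hdc : 2^i * c = d := Nat.ordProj_mul_ordCompl_eq_self d 2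
    have hcodd : ¬ 2 ∣ c := Nat.not_dvd_ordCompl Nat.prime_two hd0
    have hcd : c ∣ d := ⟨2^i, by rw [← hdc]; ring⟩
    have hcn : c ∣ n := hcd.trans hdn
    have hcled : c ≤ d := Nat.le_of_dvd (Nat.pos_of_ne_zero hd0) hcd
    have hiv : i ≤ v := by
      have h2i : (2:ℕ)^i ∣ n := (Dvd.intro c hdc).trans hdn
      have := (Nat.Prime.pow_dvd_iff_le_factorization Nat.prime_two hn0).1 h2i
      omega
    refine ⟨⟨⟨hcn, hn0⟩, Nat.odd_iff.2 (by omega), ?_⟩, ?_⟩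
    · calc c*c ≤ d*d := Nat.mul_le_mul hcled hcled
        _ < 2*n := hdlt
    · have hdd : d*d = (2^i*2^i)*(c*c) := by rw [← hdc]; ring
      have hle : (2^i*2^i)*(c*c) ≤ (2^v*2^v)*(c*c) := by
        apply Nat.mul_le_mul_right
        exact Nat.mul_le_mul (Nat.pow_le_pow_right (by norm_num) hiv)
          (Nat.pow_le_pow_right (by norm_num) hiv)
      calc n ≤ 2*(d*d) := hnle
        _ = 2*((2^i*2^i)*(c*c)) := by rw [hdd]
        _ ≤ 2*((2^v*2^v)*(c*c)) := Nat.mul_le_mul le_rfl hle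
        _ = 2*(2^v*2^v)*(c*c) := by ring
  · have main : ∀ d1 d2, (d1 ∣ n ∧ n ≤ 2*(d1*d1) ∧ d1*d1 < 2*n) →
        (d2 ∣ n ∧ n ≤ 2*(d2*d2) ∧ d2*d2 < 2*n) →
        d1 / 2^(d1.factorization 2) = d2 / 2^(d2.factorization 2) →
        d1.factorization 2 ≤ d2.factorization 2 → d1 = d2 := by
      rintro d1 d2 ⟨hd1n, hn1, h1n⟩ ⟨hd2n, hn2, h2n⟩ heq hle
      have hd10 : d1 ≠ 0 := by rintro rfl; simp at hn1; omega
      have hd20 : d2 ≠ 0 := by rintro rfl; simp at hn2; omega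
      set i1 := d1.factorization 2
      set i2 := d2.factorization 2
      have hdc1 : 2^i1 * (d1/2^i1) = d1 := Nat.ordProj_mul_ordCompl_eq_self d1 2
      have hdc2 : 2^i2 * (d2/2^i2) = d2 := Nat.ordProj_mul_ordCompl_eq_self d2 2
      rcases Nat.eq_or_lt_of_le hle with heqI | hltI
      · rw [← hdc1, ← hdc2, heq, heqI]
      · exfalso
        have h2le : 2*d1 ≤ d2 := by
          have e : (2:ℕ)^i2 = 2^(i2-i1) * 2^i1 := by rw [← pow_add]; congr 1; omega
          have h2p : 2 ≤ 2^(i2-i1) := by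
            calc (2:ℕ) = 2^1 := (pow_one 2).symm
            _ ≤ 2^(i2-i1) := Nat.pow_le_pow_right (by norm_num) (by omega)
          calc 2*d1 = 2*(2^i1 * (d1/2^i1)) := by rw [hdc1]
          _ ≤ 2^(i2-i1) * (2^i1 * (d1/2^i1)) := Nat.mul_le_mul_right _ h2p
          _ = 2^i2 * (d1/2^i1) := by rw [e]; ring
          _ = 2^i2 * (d2/2^i2) := by rw [heq]
          _ = d2 := hdc2
        have h4 : (2*d1)*(2*d1) ≤ d2*d2 := Nat.mul_le_mul h2le h2le
        have e4 : (2*d1)*(2*d1) = 4*(d1*d1) := by ring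
        omega
    intro d1 hd1 d2 hd2 heq
    simp only [Finset.mem_filter, Nat.mem_divisors] at hd1 hd2
    rcases le_total (d1.factorization 2) (d2.factorization 2) with h | h
    · exact main d1 d2 ⟨hd1.1.1, hd1.2⟩ ⟨hd2.1.1, hd2.2⟩ heq h
    · exact (main d2 d1 ⟨hd2.1.1, hd2.2⟩ ⟨hd1.1.1, hd1.2⟩ heq.symm h).symm
  · intro c hc
    simp only [Finset.mem_filter, Nat.mem_divisors] at hc
    obtain ⟨⟨⟨hcn, _⟩, hodd, hcc⟩, hQc⟩ := hc
    have hc2 : ¬ 2 ∣ c := by rw [Nat.two_dvd_ne_zero, ← Nat.odd_iff]; exact hodd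
    have hc0 : c ≠ 0 := by omega
    have hex : ∃ i, n ≤ 2*(2^i * 2^i)*(c*c) := ⟨v, hQc⟩
    set I := Nat.find hex with hI
    have hIspec : n ≤ 2*(2^I*2^I)*(c*c) := Nat.find_spec hex
    have hIv : I ≤ v := Nat.find_min' hex hQc
    refine ⟨2^I * c, ?_, ?_⟩
    · simp only [Finset.mem_filter, Nat.mem_divisors]
      have hdvd : 2^I * c ∣ n := by
        rw [← hnm]
        exact mul_dvd_mul (pow_dvd_pow 2 hIv) (odd_dvd_oddpart hnm hc2 hcn)
      have hdd : (2^I*c)*(2^I*c) = (2^I*2^I)*(c*c) := by ring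
      have e0 : 2*((2^I*c)*(2^I*c)) = 2*(2^I*2^I)*(c*c) := by ring
      refine ⟨⟨hdvd, hn0⟩, by omega, ?_⟩
      rcases Nat.eq_zero_or_pos I with hI0 | hI0
      · rw [hI0] at hdd ⊢
        simp only [pow_zero, one_mul] at hdd ⊢
        omega
      · have hmin : ¬ n ≤ 2*(2^(I-1)*2^(I-1))*(c*c) := Nat.find_min hex (by omega)
        have e : (2:ℕ)^I = 2*2^(I-1) := by
          rw [← pow_succ']; congr 1; omega
        have e2 : (2^I*2^I)*(c*c) = 4*((2^(I-1)*2^(I-1))*(c*c)) := by rw [e]; ring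
        have e5 : 2*((2^(I-1)*2^(I-1))*(c*c)) = 2*(2^(I-1)*2^(I-1))*(c*c) := by ring
        omega
    · show (2^I * c) / 2^((2^I * c).factorization 2) = c
      have hfact : ((2^I * c).factorization 2) = I := by
        rw [Nat.factorization_mul (by positivity) hc0]
        simp only [Finsupp.coe_add, Pi.add_apply]
        rw [Nat.Prime.factorization_pow Nat.prime_two,
          Nat.factorization_eq_zero_of_not_dvd hc2]
        simp
      rw [hfact, Nat.mul_div_cancel_left _ (by positivity : 0 < (2:ℕ)^I)]

private lemma stepH (n : ℕ) (hn0 : n ≠ 0) :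
    n.divisors.filter
        (fun d => u 1 1 n < ((2*d : ℕ) : ℝ) ∧ ((2*d : ℕ) : ℝ) ≤ 2 * u 1 1 n)
    = n.divisors.filter (fun d => n ≤ 2*(d*d) ∧ d*d < 2*n) := by
  apply Finset.filter_congr
  intro d hd
  obtain ⟨hdn, -⟩ := Nat.mem_divisors.1 hd
  obtain ⟨e, he⟩ := hdn
  have hd1 : 1 ≤ d := by
    rcases Nat.eq_zero_or_pos d with h | h
    · subst h; simp at he; omega
    · exact h
  have he1 : 1 ≤ e := by
    rcases Nat.eq_zero_or_pos e with h | h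
    · subst h; simp at he; omega
    · exact h
  have hu : u 1 1 n = Real.sqrt (2*(n:ℝ) + 1/4) - 1/2 := by
    unfold u; norm_num
  have harg : (0:ℝ) ≤ 2*(n:ℝ) + 1/4 := by positivity
  have hd1' : (1:ℝ) ≤ (d:ℝ) := by exact_mod_cast hd1
  have h1 : (u 1 1 n < ((2*d : ℕ) : ℝ)) ↔ n ≤ 2*(d*d) := by
    rw [hu, sub_lt_iff_lt_add]
    push_cast
    rw [Real.sqrt_lt' (by positivity : (0:ℝ) < 2*(d:ℝ) + 1/2)]
    constructor
    · intro h
      have hnat : n < 2*(d*d) + d := by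
        have : (n:ℝ) < 2*(d*d) + d := by push_cast; nlinarith
        exact_mod_cast this
      have h2 : d * e < d * (2*d + 1) := by
        calc d * e = n := he.symm
        _ < 2*(d*d) + d := hnat
        _ = d * (2*d+1) := by ring
      have h3 : e ≤ 2*d := by have := Nat.lt_of_mul_lt_mul_left h2; omega
      calc n = d * e := he
      _ ≤ d * (2*d) := Nat.mul_le_mul_left d h3
      _ = 2*(d*d) := by ring
    · intro h
      have : (n:ℝ) ≤ 2*(d*d) := by exact_mod_cast h
      push_cast at this ⊢
      nlinarith
  have h2 : (((2*d : ℕ) : ℝ) ≤ 2 * u 1 1 n) ↔ d*d < 2*n := by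
    rw [hu]
    have e2 : ((2*d : ℕ) : ℝ) = 2*(d:ℝ) := by push_cast; ring
    rw [e2]
    constructor
    · intro h
      have h' : (d:ℝ) + 1/2 ≤ Real.sqrt (2*(n:ℝ) + 1/4) := by nlinarith
      have h'' : ((d:ℝ) + 1/2)^2 ≤ 2*(n:ℝ) + 1/4 :=
        (Real.le_sqrt (by positivity) harg).1 h'
      have hnat : d*d + d ≤ 2*n := by
        have : ((d*d + d : ℕ) : ℝ) ≤ 2*(n:ℝ) := by push_cast; nlinarith
        exact_mod_cast this
      omega
    · intro h
      have h2' : d * d < d * (2*e) := by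
        calc d * d < 2*n := h
        _ = d * (2*e) := by rw [he]; ring
      have h3 : d + 1 ≤ 2*e := Nat.lt_of_mul_lt_mul_left h2'
      have h4 : d*d + d ≤ 2*n := by
        calc d*d + d = d * (d+1) := by ring
        _ ≤ d * (2*e) := Nat.mul_le_mul_left d h3
        _ = 2*n := by rw [he]; ring
      have hr : ((d*d + d : ℕ) : ℝ) ≤ 2*(n:ℝ) := by exact_mod_cast h4
      push_cast at hr
      have h' : (d:ℝ) + 1/2 ≤ Real.sqrt (2*(n:ℝ) + 1/4) := by
        rw [Real.le_sqrt (by positivity) harg]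
        nlinarith
      nlinarith
  rw [h1, h2]

theorem stmt13 (n : ℕ) (hn : 1 ≤ n) :
    hcoef 1 1 n =
      ((n.divisors.filter
        (fun d => u 1 1 n < ((2*d : ℕ) : ℝ) ∧ ((2*d : ℕ) : ℝ) ≤ 2 * u 1 1 n)).card : ℤ)
      ∧ 0 ≤ hcoef 1 1 n := by
  have hn0 : n ≠ 0 := by omega
  have hnm : 2^(n.factorization 2) * (n / 2^(n.factorization 2)) = n :=
    Nat.ordProj_mul_ordCompl_eq_self n 2
  have hm2 : ¬ 2 ∣ (n / 2^(n.factorization 2)) := Nat.not_dvd_ordCompl Nat.prime_two hn0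
  have hE := Finset.card_filter_add_card_filter_not
      (s := n.divisors.filter (fun c => Odd c ∧ c*c < 2*n))
      (p := fun c => n ≤ 2 * (2^(n.factorization 2) * 2^(n.factorization 2)) * (c*c))
  have hF := stepF n (n.factorization 2) (n / 2^(n.factorization 2)) hn0 hnm hm2
  have hG := stepG n (n.factorization 2) (n / 2^(n.factorization 2)) hn0 rfl hnm
  have hH := stepH n hn0
  have hAB := stepAB n hn
  have hC := stepC n hn0
  have hD := stepD n hn0
  have main : hcoef 1 1 n =
      ((n.divisors.filter
        (fun d => u 1 1 n < ((2*d : ℕ) : ℝ) ∧ ((2*d : ℕ) : ℝ) ≤ 2 * u 1 1 n)).card : ℤ) := by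
    rw [hH, hAB, hC, hD, hG]
    omega
  exact ⟨main, by rw [main]; exact Int.natCast_nonneg _⟩
end

section
/- There exists a constant c > 0 such that for all x ≥ 2, the number of integers 0 ≤ n ≤ x with h_{m,k}(n) = 0 is at least c·x/log x, for any fixed integer m ≥ 0 and odd integer k ≥ 1. -/
open scoped Classical

lemma hd_zero (m k : ℕ) : hd m k 0 = 0 := by simp [hd]

lemma hd_prime (m k p : ℕ) (hk1 : 1 ≤ k) (hp : p.Prime)
    (h1 : 2*k + 2*m ≤ p) (h2 : 4 ≤ p) : hd m k p = 0 := by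
  rw [hd, Finset.card_eq_zero, Finset.filter_eq_empty_iff]
  intro d hdmem
  rw [Nat.mem_divisors] at hdmem
  obtain ⟨a, ha⟩ : ∃ a : ℝ, (m:ℝ) - k/2 = a := ⟨_, rfl⟩
  obtain ⟨s, hs⟩ : ∃ s : ℝ, Real.sqrt (2*k*p + a^2) = s := ⟨_, rfl⟩
  have hs0 : 0 ≤ s := hs ▸ Real.sqrt_nonneg _
  have hs2 : s^2 = 2*k*p + a^2 := by rw [← hs]; exact Real.sq_sqrt (by positivity)
  have hu : u m k p = s - a := by rw [u, ha, hs]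
  have hm0 : (0:ℝ) ≤ (m:ℝ) := by positivity
  have hk' : (1:ℝ) ≤ (k:ℝ) := by exact_mod_cast hk1
  have hp4 : (4:ℝ) ≤ (p:ℝ) := by exact_mod_cast h2
  have hP : 2*(k:ℝ) + 2*(m:ℝ) ≤ (p:ℝ) := by exact_mod_cast h1
  have ha1 : a ≤ (m:ℝ) := by rw [← ha]; nlinarith
  have ha2 : -((k:ℝ)/2) ≤ a := by rw [← ha]; nlinarith
  rcases (Nat.Prime.eq_one_or_self_of_dvd hp d hdmem.1) with rfl | rfl
  · rintro ⟨h3, -⟩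
    rw [hu] at h3
    push_cast at h3
    -- h3 : s - a < 2 * k, but s ≥ 2k + a
    nlinarith [hs2, hs0, ha1, hP, hk', sq_nonneg (s - (2*k + a))]
  · rintro ⟨-, h4⟩
    rw [hu] at h4
    push_cast at h4
    -- h4 : 2kd ≤ 2(s - a), but s < kd + a
    have hkd : (4:ℝ)*k ≤ (k:ℝ)*d := by nlinarith
    have h6 : (k:ℝ)*d + a ≤ s := by linarith
    have h6' : (0:ℝ) < (k:ℝ)*d + a := by linarith
    have h7 : ((k:ℝ)*d + a)^2 ≤ s^2 := by nlinarith
    have h8 : (1:ℝ) ≤ (k:ℝ)*d + 2*a - 2 := by linarith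
    have h9 : (0:ℝ) ≤ (k:ℝ)*d := by positivity
    nlinarith [h7, hs2, mul_le_mul_of_nonneg_left h8 h9]

/-- Chebyshev-type bound from the central binomial coefficient. -/
lemma cheb (n : ℕ) (hn : 1 ≤ n) :
    4^n ≤ (2*n)^(((Finset.range (2*n+1)).filter Nat.Prime).card + 1) := by
  have h1 : 4^n ≤ 2*n * Nat.centralBinom n :=
    Nat.four_pow_le_two_mul_self_mul_centralBinom n hn
  have h2a : ∏ p ∈ (Finset.range (2*n+1)).filter Nat.Prime,
        p ^ (Nat.centralBinom n).factorization p
      = ∏ p ∈ Finset.range (2*n+1), p ^ (Nat.centralBinom n).factorization p := by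
    refine Finset.prod_filter_of_ne fun p _ h => ?_
    by_contra hnp
    rw [Nat.factorization_eq_zero_of_not_prime _ hnp] at h
    simp at h
  have h2 : Nat.centralBinom n
      = ∏ p ∈ (Finset.range (2*n+1)).filter Nat.Prime,
          p ^ (Nat.centralBinom n).factorization p := by
    rw [h2a, Nat.prod_pow_factorization_centralBinom n]
  have h3 : ∀ p ∈ (Finset.range (2*n+1)).filter Nat.Prime,
      p ^ (Nat.centralBinom n).factorization p ≤ 2*n := by
    intro p _
    rw [Nat.centralBinom_eq_two_mul_choose]
    exact Nat.pow_factorization_choose_le (by omega)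
  have h4 : Nat.centralBinom n
      ≤ (2*n)^(((Finset.range (2*n+1)).filter Nat.Prime).card) := by
    rw [h2]; exact Finset.prod_le_pow_card _ _ _ h3
  calc 4^n ≤ 2*n * Nat.centralBinom n := h1
    _ ≤ 2*n * (2*n)^(((Finset.range (2*n+1)).filter Nat.Prime).card) :=
        Nat.mul_le_mul_left _ h4
    _ = (2*n)^(((Finset.range (2*n+1)).filter Nat.Prime).card + 1) := by
        rw [pow_succ]; ring

set_option maxHeartbeats 1600000 in
theorem stmt14 (m k : ℕ) (hk : Odd k) (hk1 : 1 ≤ k) :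
    ∃ c : ℝ, 0 < c ∧ ∀ x : ℝ, 2 ≤ x →
      c * x / Real.log x ≤
        (((Finset.range (⌊x⌋₊ + 1)).filter (fun n => hd m k n = 0)).card : ℝ) := by
  obtain ⟨P₀, hP₀⟩ : ∃ q : ℕ, q = 2*k + 2*m + 4 := ⟨_, rfl⟩
  obtain ⟨P₁, hP₁⟩ : ∃ q : ℕ, q = 14 * (P₀ + 1) := ⟨_, rfl⟩
  have hP₁pos : 0 < P₁ := by omega
  refine ⟨Real.log 2 / (P₁:ℝ)^2, by
    have : (0:ℝ) < (P₁:ℝ) := by exact_mod_cast hP₁pos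
    positivity, fun x hx => ?_⟩
  have hx0 : (0:ℝ) < x := by linarith
  have hL0 : 0 < Real.log x := Real.log_pos (by linarith)
  have hlog2 : (0.6931471803 : ℝ) < Real.log 2 := Real.log_two_gt_d9
  obtain ⟨T, hT⟩ : ∃ t : Finset ℕ,
      t = (Finset.range (⌊x⌋₊ + 1)).filter (fun n => hd m k n = 0) := ⟨_, rfl⟩
  rw [← hT]
  have hT1 : 1 ≤ T.card := by
    refine Finset.card_pos.mpr ⟨0, ?_⟩
    rw [hT]
    simp [hd_zero]
  rw [div_le_iff₀ hL0]
  by_cases hbig : x ≤ ((P₁:ℝ))^2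
  · -- small case : c * x ≤ 1 * log x ≤ T.card * log x
    have hlogx2 : Real.log 2 ≤ Real.log x := Real.log_le_log (by norm_num) hx
    have h1 : Real.log 2 / (P₁:ℝ)^2 * x ≤ Real.log 2 := by
      have hP1R : (1:ℝ) ≤ (P₁:ℝ) := by exact_mod_cast hP₁pos
      rw [div_mul_eq_mul_div, div_le_iff₀ (by positivity)]
      have := mul_le_mul_of_nonneg_left hbig (show (0:ℝ) ≤ Real.log 2 by linarith)
      linarith
    have h2 : (1:ℝ) ≤ (T.card : ℝ) := by exact_mod_cast hT1
    have h3 := mul_le_mul_of_nonneg_right h2 hL0.le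
    linarith
  · push_neg at hbig
    have hP₁14 : (14:ℝ) ≤ (P₁:ℝ) := by
      have : 14 ≤ P₁ := by omega
      exact_mod_cast this
    have hx196 : (196:ℝ) ≤ x := by nlinarith
    obtain ⟨N, hN⟩ : ∃ q : ℕ, q = ⌊x⌋₊ := ⟨_, rfl⟩
    obtain ⟨n, hn⟩ : ∃ q : ℕ, q = N / 2 := ⟨_, rfl⟩
    have hNx : (N:ℝ) ≤ x := hN ▸ Nat.floor_le hx0.le
    have hxN : x < (N:ℝ) + 1 := by rw [hN]; exact Nat.lt_floor_add_one x
    have hNn : N ≤ 2*n + 1 := by omega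
    have h2nN : 2*n ≤ N := by omega
    have hn1 : 1 ≤ n := by
      have h2N : (2:ℕ) ≤ N := by
        rw [hN]; exact Nat.le_floor (by exact_mod_cast hx)
      omega
    obtain ⟨S, hS⟩ : ∃ t : Finset ℕ,
        t = (Finset.range (2*n+1)).filter Nat.Prime := ⟨_, rfl⟩
    obtain ⟨A, hA⟩ : ∃ q : ℕ, q = S.card := ⟨_, rfl⟩
    -- prime counting lower bound (real form)
    have hcheb : (4:ℕ)^n ≤ (2*n)^(A+1) := by rw [hA, hS]; exact cheb n hn1
    have hn1' : (1:ℝ) ≤ (n:ℝ) := by exact_mod_cast hn1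
    have hlogle : (n:ℝ) * (2 * Real.log 2) ≤ ((A:ℝ)+1) * Real.log (2*(n:ℝ)) := by
      have hle : ((4^n : ℕ) : ℝ) ≤ (((2*n)^(A+1) : ℕ) : ℝ) := by exact_mod_cast hcheb
      push_cast at hle
      have h := Real.log_le_log (by positivity) hle
      rw [Real.log_pow, Real.log_pow] at h
      have h4 : Real.log (4:ℝ) = 2 * Real.log 2 := by
        rw [show (4:ℝ) = 2^2 by norm_num, Real.log_pow]
        push_cast; ring
      rw [h4] at h
      push_cast at h
      linarith
    have h2nx : 2*(n:ℝ) ≤ x := by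
      have : ((2*n : ℕ):ℝ) ≤ (N:ℝ) := by exact_mod_cast h2nN
      push_cast at this; linarith
    have hlog2n : Real.log (2*(n:ℝ)) ≤ Real.log x :=
      Real.log_le_log (by linarith) h2nx
    have hlog2n0 : 0 ≤ Real.log (2*(n:ℝ)) := Real.log_nonneg (by linarith)
    -- counting: A ≤ T.card + P₀
    have hcount : A ≤ T.card + P₀ := by
      have hsub : S.filter (fun p => P₀ ≤ p) ⊆ T := by
        intro p hp
        rw [hS] at hp
        simp only [Finset.mem_filter, Finset.mem_range] at hp
        obtain ⟨⟨hp1, hp2⟩, hp3⟩ := hp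
        rw [hT]
        simp only [Finset.mem_filter, Finset.mem_range]
        refine ⟨by omega, hd_prime m k p hk1 hp2 (by omega) (by omega)⟩
      have hsub2 : S.filter (fun p => ¬ P₀ ≤ p) ⊆ Finset.range P₀ := by
        intro p hp
        simp only [Finset.mem_filter, not_le] at hp
        exact Finset.mem_range.mpr hp.2
      have heq := Finset.card_filter_add_card_filter_not
        (s := S) (p := fun p => P₀ ≤ p)
      have c1 : (S.filter (fun p => P₀ ≤ p)).card ≤ T.card := Finset.card_le_card hsub
      have c2 : (S.filter (fun p => ¬ P₀ ≤ p)).card ≤ P₀ := by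
        simpa using Finset.card_le_card hsub2
      omega
    have hTA : (A:ℝ) - P₀ ≤ (T.card : ℝ) := by
      have : (A:ℝ) ≤ (T.card : ℝ) + (P₀:ℝ) := by exact_mod_cast hcount
      linarith
    -- relate n and x
    have hnx : x/4 ≤ (n:ℝ) := by
      have h2n : x - 2 ≤ 2*(n:ℝ) := by
        have : (N:ℝ) ≤ 2*(n:ℝ) + 1 := by exact_mod_cast hNn
        linarith
      linarith
    -- sqrt bounds
    obtain ⟨s, hsdef⟩ : ∃ s : ℝ, s = Real.sqrt x := ⟨_, rfl⟩
    have hsx : s^2 = x := by rw [hsdef]; exact Real.sq_sqrt hx0.le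
    have hs0 : 0 ≤ s := hsdef ▸ Real.sqrt_nonneg x
    have hsP : (P₁:ℝ) ≤ s := by
      rw [hsdef]
      have h := Real.sqrt_le_sqrt hbig.le
      rwa [Real.sqrt_sq (by positivity)] at h
    have hLs : Real.log x ≤ 2 * s := by
      have hs0' : 0 < s := by nlinarith
      have h1 : Real.log s ≤ s - 1 := Real.log_le_sub_one_of_pos hs0'
      have h2 : Real.log (Real.sqrt x) = Real.log x / 2 := Real.log_sqrt hx0.le
      rw [← hsdef] at h2
      linarith
    -- main chain
    have key1 : x/2 * Real.log 2 ≤ ((A:ℝ)+1) * Real.log x := by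
      have hA0 : (0:ℝ) ≤ (A:ℝ) + 1 := by positivity
      have h := mul_le_mul_of_nonneg_left hlog2n hA0
      have h' := mul_le_mul_of_nonneg_right hnx (show (0:ℝ) ≤ 2 * Real.log 2 by linarith)
      nlinarith
    have key2 : ((P₀:ℝ)+1) * Real.log x ≤ x * Real.log 2 / 4 := by
      have hP₀P₁ : 14*((P₀:ℝ)+1) = (P₁:ℝ) := by
        rw [hP₁]; push_cast; ring
      have hP₀0 : (0:ℝ) ≤ (P₀:ℝ)+1 := by positivity
      have h1 : ((P₀:ℝ)+1) * Real.log x ≤ ((P₀:ℝ)+1) * (2*s) :=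
        mul_le_mul_of_nonneg_left hLs hP₀0
      have hss : s * s = x := by rw [← hsx]; ring
      have h2 : ((P₀:ℝ)+1) * (2*s) ≤ x * Real.log 2 / 4 := by
        have hs14 : (P₁:ℝ) * s ≤ s * s := mul_le_mul_of_nonneg_right hsP hs0
        have hcs0 : (0:ℝ) ≤ (P₁:ℝ) * s := by positivity
        have e1 : (P₁:ℝ) * s * Real.log 2 ≤ s * s * Real.log 2 :=
          mul_le_mul_of_nonneg_right hs14 (by linarith)
        have e1' : (P₁:ℝ) * s * Real.log 2 ≤ x * Real.log 2 := by
          rw [← hss]; exact e1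
        have e2 : (P₁:ℝ) * s * 0.6931471803 ≤ (P₁:ℝ) * s * Real.log 2 :=
          mul_le_mul_of_nonneg_left hlog2.le hcs0
        have hexp : ((P₀:ℝ)+1) * (2*s) = (P₁:ℝ) * s / 7 := by
          rw [← hP₀P₁]; ring
        linarith [e1', e2, hexp, hcs0]
      linarith
    have key3 : Real.log 2 / (P₁:ℝ)^2 * x ≤ x * Real.log 2 / 4 := by
      rw [div_mul_eq_mul_div, div_le_div_iff₀ (by positivity) (by norm_num)]
      have h4P : (4:ℝ) ≤ (P₁:ℝ)^2 := by nlinarith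
      have hxl : (0:ℝ) ≤ x * Real.log 2 := by positivity
      calc Real.log 2 * x * 4 = (x * Real.log 2) * 4 := by ring
        _ ≤ (x * Real.log 2) * (P₁:ℝ)^2 := mul_le_mul_of_nonneg_left h4P hxl
        _ = x * Real.log 2 * (P₁:ℝ)^2 := by ring
    have key4 : ((A:ℝ) - P₀) * Real.log x ≤ (T.card : ℝ) * Real.log x :=
      mul_le_mul_of_nonneg_right hTA hL0.le
    have key5 : ((A:ℝ) - P₀) * Real.log x
        = ((A:ℝ)+1) * Real.log x - ((P₀:ℝ)+1) * Real.log x := by ring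
    linarith [key1, key2, key3, key4, key5]
end
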